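/- Fix integers d ≥ 1, s ≥ 2, and M ≥ 1. For θ ∈ {1,…,M}^d let x_θ ∈ ℝ^d have i-th coordinate (θ_i − 1/2)/M. Let g : ℝ^d → ℝ be of class C² with g(x) = 0 whenever ‖x‖₂ ≥ 1/3, and set c := ∂²g/∂x₁²(0). For a sign assignment β : {1,…,M}^d → {−1,1}, define h_β(x) := ∑_{θ ∈ {1,…,M}^d} M^{−s} β(θ) g(M(x − x_θ)). Then for every θ ∈ {1,…,M}^d, ∂²h_β/∂x₁²(x_θ) = M^{2−s} β(θ) c. Consequently, if c > 0, then for every β and θ one has ∂²h_β/∂x₁²(x_θ) > 0 if and only if β(θ) = 1, so the family of sets {x ∈ ℝ^d : ∂²h_β/∂x₁²(x) > 0}, indexed by all 2^{M^d} sign assignments β, shatters the set of the M^d centers {x_θ : θ ∈ {1,…,M}^d}. -/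

import Mathlib

/-- Partial derivative in the `i`-th coordinate direction. -/
noncomputable def pderiv' (d : ℕ) (i : Fin d) (f : (Fin d → ℝ) → ℝ) :
    (Fin d → ℝ) → ℝ :=
  fun x => fderiv ℝ f x (Pi.single i 1)

/-- The center `x_θ` of the subcube `Q_θ`, with `(x_θ)ᵢ = (θᵢ - 1/2)/M`. -/
noncomputable def center (d M : ℕ) (θ : Fin d → ℕ) : Fin d → ℝ :=
  fun i => ((θ i : ℝ) - 1 / 2) / M

/-- The function `h_β(x) = ∑_{θ ∈ {1,…,M}^d} M^{-s} β(θ) g(M (x - x_θ))`. -/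
noncomputable def bumpSum (d s M : ℕ) (g : (Fin d → ℝ) → ℝ) (β : (Fin d → ℕ) → ℝ) :
    (Fin d → ℝ) → ℝ :=
  fun x => ∑ θ ∈ Fintype.piFinset (fun _ : Fin d => Finset.Icc 1 M),
    (M : ℝ) ^ (-(s : ℤ)) * β θ * g (fun i => (M : ℝ) * (x i - center d M θ i))

/-- A family `F` of subsets of `X` shatters a set `S ⊆ X` if every subset of `S`
is of the form `A ∩ S` for some `A ∈ F`. -/
def ShattersFam {X : Type*} (F : Set (Set X)) (S : Set X) : Prop :=
  ∀ T ⊆ S, ∃ A ∈ F, A ∩ S = T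

lemma pderiv'_comp (d : ℕ) (i : Fin d) (M : ℝ) (cθ : Fin d → ℝ)
    (f : (Fin d → ℝ) → ℝ) (x : Fin d → ℝ)
    (hf : DifferentiableAt ℝ f (fun j => M * (x j - cθ j))) :
    pderiv' d i (fun y => f (fun j => M * (y j - cθ j))) x
      = M * pderiv' d i f (fun j => M * (x j - cθ j)) := by
  have hφ : HasFDerivAt (fun y : Fin d → ℝ => fun j => M * (y j - cθ j))
      (M • ContinuousLinearMap.id ℝ (Fin d → ℝ)) x := by
    have : HasFDerivAt (fun y : Fin d → ℝ => M • (y - cθ))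
        (M • ContinuousLinearMap.id ℝ (Fin d → ℝ)) x :=
      ((hasFDerivAt_id x).sub_const cθ).const_smul M
    exact this
  have hcomp := hf.hasFDerivAt.comp x hφ
  have h2 : HasFDerivAt (fun y => f (fun j => M * (y j - cθ j)))
      ((fderiv ℝ f fun j => M * (x j - cθ j)).comp
        (M • ContinuousLinearMap.id ℝ (Fin d → ℝ))) x := hcomp
  simp only [pderiv', h2.fderiv]
  simp [smul_eq_mul]

lemma inner_diff (d : ℕ) (M : ℝ) (cθ : Fin d → ℝ) :
    Differentiable ℝ (fun y : Fin d → ℝ => fun j => M * (y j - cθ j)) := by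
  have : Differentiable ℝ (fun y : Fin d → ℝ => M • (y - cθ)) :=
    (differentiable_id.sub_const cθ).const_smul M
  exact this

lemma pderiv'_const_mul (d : ℕ) (i : Fin d) (k : ℝ) (f : (Fin d → ℝ) → ℝ)
    (x : Fin d → ℝ) (hf : DifferentiableAt ℝ f x) :
    pderiv' d i (fun y => k * f y) x = k * pderiv' d i f x := by
  simp only [pderiv']
  rw [fderiv_const_mul hf]
  simp

lemma pderiv'_differentiable (d : ℕ) (i : Fin d) (g : (Fin d → ℝ) → ℝ)
    (hg2 : ContDiff ℝ 2 g) : Differentiable ℝ (pderiv' d i g) := by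
  have h1 : ContDiff ℝ 1 (fderiv ℝ g) := hg2.fderiv_right (m := 1) (by norm_num)
  have : ContDiff ℝ 1 (fun x => fderiv ℝ g x (Pi.single i 1)) :=
    h1.clm_apply contDiff_const
  exact this.differentiable one_ne_zero

lemma key_deriv (d s M : ℕ) (i0 : Fin d) (hM : 1 ≤ M)
    (g : (Fin d → ℝ) → ℝ) (hg2 : ContDiff ℝ 2 g)
    (hg0 : ∀ x : Fin d → ℝ, (1 : ℝ) / 3 ≤ Real.sqrt (∑ i, x i ^ 2) → g x = 0)
    (β : (Fin d → ℕ) → ℝ) (θ : Fin d → ℕ)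
    (hθ : θ ∈ Fintype.piFinset (fun _ : Fin d => Finset.Icc 1 M)) :
    pderiv' d i0 (pderiv' d i0 (bumpSum d s M g β)) (center d M θ)
      = (M : ℝ) ^ ((2 : ℤ) - s) * β θ * pderiv' d i0 (pderiv' d i0 g) 0 := by
  have hM0 : (0:ℝ) < M := by exact_mod_cast hM
  have hMne : (M:ℝ) ≠ 0 := hM0.ne'
  set c₀ := center d M θ with hc₀
  set r : ℝ := 1/(3*M) with hr
  have hr0 : 0 < r := by positivity
  have gz : ∀ x : Fin d → ℝ, (∃ i, 1/3 ≤ |x i|) → g x = 0 := by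
    rintro x ⟨i, hi⟩
    apply hg0
    calc (1:ℝ)/3 ≤ |x i| := hi
    _ = Real.sqrt (x i ^ 2) := (Real.sqrt_sq_eq_abs _).symm
    _ ≤ Real.sqrt (∑ j, x j ^ 2) := Real.sqrt_le_sqrt
        (Finset.single_le_sum (fun j _ => sq_nonneg (x j)) (Finset.mem_univ i))
  have hzero : ∀ x ∈ Metric.ball c₀ r,
      ∀ θ' ∈ Fintype.piFinset (fun _ : Fin d => Finset.Icc 1 M), θ' ≠ θ →
      g (fun j => (M:ℝ) * (x j - center d M θ' j)) = 0 := by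
    intro x hx θ' _ hne
    obtain ⟨i, hi⟩ : ∃ i, θ' i ≠ θ i := by
      by_contra h; push_neg at h; exact hne (funext h)
    apply gz
    refine ⟨i, ?_⟩
    have h1 : (1:ℝ)/M ≤ |center d M θ' i - c₀ i| := by
      have hz : ((θ' i : ℤ) - θ i) ≠ 0 := sub_ne_zero.mpr (by exact_mod_cast hi)
      have h1' : (1:ℝ) ≤ |(θ' i : ℝ) - θ i| := by
        have := Int.one_le_abs hz
        calc (1:ℝ) ≤ |((θ' i : ℤ) - θ i : ℤ)| := by exact_mod_cast this
        _ = |(θ' i : ℝ) - θ i| := by push_cast; ring_nf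
      have hcd : center d M θ' i - c₀ i = ((θ' i : ℝ) - θ i)/M := by
        simp only [hc₀, center]; ring
      rw [hcd, abs_div, abs_of_pos hM0]
      gcongr
    have h2 : |x i - c₀ i| < r := by
      have := dist_le_pi_dist x c₀ i
      rw [Real.dist_eq] at this
      exact lt_of_le_of_lt this (Metric.mem_ball.mp hx)
    have key := abs_sub_abs_le_abs_sub (center d M θ' i - c₀ i) (center d M θ' i - x i)
    rw [show (center d M θ' i - c₀ i) - (center d M θ' i - x i) = x i - c₀ i by ring] at key
    have h3 : 1/M - r ≤ |x i - center d M θ' i| := by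
      rw [abs_sub_comm]; linarith
    have hMr : (M:ℝ) * r = 1/3 := by rw [hr]; field_simp
    calc (1:ℝ)/3 ≤ M * (1/M - r) := by
          rw [mul_sub, hMr, mul_one_div, div_self hMne]; norm_num
    _ ≤ M * |x i - center d M θ' i| := by
          exact mul_le_mul_of_nonneg_left h3 hM0.le
    _ = |M * (x i - center d M θ' i)| := by
          rw [abs_mul, abs_of_pos hM0]
  have heq : ∀ x ∈ Metric.ball c₀ r, bumpSum d s M g β x
      = (M:ℝ)^(-(s:ℤ)) * β θ * g (fun j => (M:ℝ)*(x j - c₀ j)) := by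
    intro x hx
    exact Finset.sum_eq_single_of_mem θ hθ
      (fun θ' h' hne => by rw [hzero x hx θ' h' hne, mul_zero])
  have hgdiff : Differentiable ℝ g := hg2.differentiable (by norm_num)
  have hEv1 : ∀ x ∈ Metric.ball c₀ r,
      pderiv' d i0 (bumpSum d s M g β) x
        = ((M:ℝ)^(-(s:ℤ)) * β θ) * (M * pderiv' d i0 g (fun j => (M:ℝ)*(x j - c₀ j))) := by
    intro x hx
    have hEq : bumpSum d s M g β =ᶠ[nhds x]
        fun y => (M:ℝ)^(-(s:ℤ)) * β θ * g (fun j => (M:ℝ)*(y j - c₀ j)) := by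
      filter_upwards [Metric.isOpen_ball.mem_nhds hx] with y hy using heq y hy
    have e1 : pderiv' d i0 (bumpSum d s M g β) x
        = pderiv' d i0 (fun y => (M:ℝ)^(-(s:ℤ)) * β θ * g (fun j => (M:ℝ)*(y j - c₀ j))) x := by
      simp only [pderiv', hEq.fderiv_eq]
    have hd1 : DifferentiableAt ℝ (fun y => g (fun j => (M:ℝ)*(y j - c₀ j))) x :=
      ((hgdiff _).comp x ((inner_diff d M c₀) x) : _)
    rw [e1, pderiv'_const_mul d i0 _ _ x hd1, pderiv'_comp d i0 M c₀ g x (hgdiff _)]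
  have hpgdiff : Differentiable ℝ (pderiv' d i0 g) := pderiv'_differentiable d i0 g hg2
  have hEq2 : pderiv' d i0 (bumpSum d s M g β) =ᶠ[nhds c₀]
      fun x => ((M:ℝ)^(-(s:ℤ)) * β θ) * (M * pderiv' d i0 g (fun j => (M:ℝ)*(x j - c₀ j))) := by
    filter_upwards [Metric.isOpen_ball.mem_nhds (Metric.mem_ball_self hr0)] with y hy
      using hEv1 y hy
  have e2 : pderiv' d i0 (pderiv' d i0 (bumpSum d s M g β)) c₀
      = pderiv' d i0 (fun x => ((M:ℝ)^(-(s:ℤ)) * β θ * M) *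
          pderiv' d i0 g (fun j => (M:ℝ)*(x j - c₀ j))) c₀ := by
    simp only [pderiv', hEq2.fderiv_eq]
    congr 2
    funext x
    ring
  have hd2 : DifferentiableAt ℝ (fun y => pderiv' d i0 g (fun j => (M:ℝ)*(y j - c₀ j))) c₀ :=
    ((hpgdiff _).comp c₀ ((inner_diff d M c₀) c₀) : _)
  rw [e2, pderiv'_const_mul d i0 _ _ c₀ hd2,
    pderiv'_comp d i0 M c₀ (pderiv' d i0 g) c₀ (hpgdiff _)]
  have h0 : (fun j => (M:ℝ)*(c₀ j - c₀ j)) = 0 := by funext j; simp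
  rw [h0]
  have hzp : (M:ℝ)^((2:ℤ)-s) = (M:ℝ)^(-(s:ℤ)) * M * M := by
    rw [show ((2:ℤ) - s) = -(s:ℤ) + 1 + 1 by ring, zpow_add₀ hMne, zpow_add₀ hMne, zpow_one]
  rw [hzp]; ring

/-- Values of `∂² h_β / ∂x₁²` at the grid centers: with `c = ∂²g/∂x₁²(0)`, one has
`∂²h_β/∂x₁²(x_θ) = M^{2-s} β(θ) c` for every `θ ∈ {1,…,M}^d`; consequently, if `c > 0`,
the sign of `∂²h_β/∂x₁²` at `x_θ` matches `β(θ)`, so the positivity sets of the second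
derivatives `∂²h_β/∂x₁²` (over all sign assignments `β`) shatter the `M^d` centers. -/
theorem bumpSum_second_deriv_shatters (d s M : ℕ) (hd : 0 < d) (hs : 2 ≤ s)
    (hM : 1 ≤ M) (g : (Fin d → ℝ) → ℝ) (hg2 : ContDiff ℝ 2 g)
    (hg0 : ∀ x : Fin d → ℝ, (1 : ℝ) / 3 ≤ Real.sqrt (∑ i, x i ^ 2) → g x = 0)
    (c : ℝ) (hc : c = pderiv' d ⟨0, hd⟩ (pderiv' d ⟨0, hd⟩ g) 0) :
    (∀ β : (Fin d → ℕ) → ℝ, (∀ θ, β θ = 1 ∨ β θ = -1) →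
      ∀ θ ∈ Fintype.piFinset (fun _ : Fin d => Finset.Icc 1 M),
        pderiv' d ⟨0, hd⟩ (pderiv' d ⟨0, hd⟩ (bumpSum d s M g β)) (center d M θ)
          = (M : ℝ) ^ ((2 : ℤ) - s) * β θ * c) ∧
    (0 < c →
      (∀ β : (Fin d → ℕ) → ℝ, (∀ θ, β θ = 1 ∨ β θ = -1) →
        ∀ θ ∈ Fintype.piFinset (fun _ : Fin d => Finset.Icc 1 M),
          (0 < pderiv' d ⟨0, hd⟩ (pderiv' d ⟨0, hd⟩ (bumpSum d s M g β))
              (center d M θ) ↔ β θ = 1)) ∧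
      ShattersFam
        {A : Set (Fin d → ℝ) | ∃ β : (Fin d → ℕ) → ℝ, (∀ θ, β θ = 1 ∨ β θ = -1) ∧
          A = {x | 0 < pderiv' d ⟨0, hd⟩ (pderiv' d ⟨0, hd⟩ (bumpSum d s M g β)) x}}
        (center d M '' {θ | ∀ i, 1 ≤ θ i ∧ θ i ≤ M})) := by
  set i0 : Fin d := ⟨0, hd⟩ with hi0
  have hM0 : (0:ℝ) < M := by exact_mod_cast hM
  have hzp : (0:ℝ) < (M:ℝ)^((2:ℤ)-s) := zpow_pos hM0 _
  have part1 : ∀ β : (Fin d → ℕ) → ℝ,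
      ∀ θ ∈ Fintype.piFinset (fun _ : Fin d => Finset.Icc 1 M),
      pderiv' d i0 (pderiv' d i0 (bumpSum d s M g β)) (center d M θ)
        = (M:ℝ)^((2:ℤ)-s) * β θ * c := by
    intro β θ hθ
    rw [key_deriv d s M i0 hM g hg2 hg0 β θ hθ, hc]
  refine ⟨fun β _ θ hθ => part1 β θ hθ, fun hcpos => ?_⟩
  have part2 : ∀ β : (Fin d → ℕ) → ℝ, (∀ θ, β θ = 1 ∨ β θ = -1) →
      ∀ θ ∈ Fintype.piFinset (fun _ : Fin d => Finset.Icc 1 M),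
      (0 < pderiv' d i0 (pderiv' d i0 (bumpSum d s M g β)) (center d M θ) ↔ β θ = 1) := by
    intro β hβ θ hθ
    rw [part1 β θ hθ]
    rcases hβ θ with h | h
    · rw [h]; simpa using mul_pos hzp hcpos
    · rw [h]
      constructor
      · intro h2; exfalso; nlinarith
      · intro h2; norm_num at h2
  refine ⟨part2, ?_⟩
  intro T hT
  classical
  set β : (Fin d → ℕ) → ℝ := fun θ => if center d M θ ∈ T then 1 else -1 with hβdef
  have hβ : ∀ θ, β θ = 1 ∨ β θ = -1 := by
    intro θ; by_cases h : center d M θ ∈ T <;> simp [hβdef, h]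
  refine ⟨{x | 0 < pderiv' d i0 (pderiv' d i0 (bumpSum d s M g β)) x}, ⟨β, hβ, rfl⟩, ?_⟩
  ext x
  simp only [Set.mem_inter_iff, Set.mem_setOf_eq, Set.mem_image]
  constructor
  · rintro ⟨hxA, θ, hθS, rfl⟩
    have hθF : θ ∈ Fintype.piFinset (fun _ : Fin d => Finset.Icc 1 M) := by
      simp only [Fintype.mem_piFinset, Finset.mem_Icc]; exact hθS
    have h1 := (part2 β hβ θ hθF).mp hxA
    by_contra hnot
    rw [hβdef] at h1
    simp only [if_neg hnot] at h1
    norm_num at h1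
  · intro hxT
    obtain ⟨θ, hθS, rfl⟩ := hT hxT
    have hθF : θ ∈ Fintype.piFinset (fun _ : Fin d => Finset.Icc 1 M) := by
      simp only [Fintype.mem_piFinset, Finset.mem_Icc]; exact hθS
    refine ⟨(part2 β hβ θ hθF).mpr ?_, ⟨θ, hθS, rfl⟩⟩
    rw [hβdef]
    simp [hxT]
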